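/- Let M be an n×n Hermitian positive definite complex matrix, B an n×m complex matrix, i an index in {0,…,n−1}, and E_i = e_i e_i† the matrix with a single 1 in position (i,i). Then for all s, t ≥ 0, in the Loewner order, B† (M + ((s+t)/2) E_i)^{-1} B ≤ (1/2) ( B† (M + s E_i)^{-1} B + B† (M + t E_i)^{-1} B ); that is, the matrix-valued map t ↦ B† (M + t E_i)^{-1} B is midpoint-convex on [0,∞). -/

import Mathlib

open ComplexOrder Matrix

lemma psd_real_smul {k : ℕ} (r : ℝ) (hr : 0 ≤ r) {A : Matrix (Fin k) (Fin k) ℂ}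
    (hA : A.PosSemidef) : ((r : ℂ) • A).PosSemidef := by
  rw [posSemidef_iff_dotProduct_mulVec]
  constructor
  · rw [IsHermitian, conjTranspose_smul, hA.1.eq]
    simp [Complex.conj_ofReal]
  · intro x
    rw [smul_mulVec, dotProduct_smul]
    exact mul_nonneg (by exact_mod_cast Complex.zero_le_real.mpr hr) (hA.dotProduct_mulVec_nonneg x)

lemma psd_E {k : ℕ} (i : Fin k) : (Matrix.single i i (1:ℂ)).PosSemidef := by
  rw [posSemidef_iff_dotProduct_mulVec]
  constructor
  · rw [IsHermitian]
    ext a b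
    simp [conjTranspose_apply, Matrix.single, Matrix.of_apply, and_comm]
  · intro x
    have h : (Matrix.single i i (1:ℂ)) *ᵥ x = fun j => if j = i then x i else 0 := by
      ext j
      simp [mulVec, dotProduct, Matrix.single, Matrix.of_apply, ite_and, eq_comm]
    rw [h, dotProduct]
    rw [Finset.sum_eq_single i]
    · simp
      exact star_mul_self_nonneg _
    · intro b _ hb; simp [hb]
    · simp

/-- Let `M` be an `n × n` Hermitian positive definite complex matrix, `B` an `n × m` complex
matrix, `i` an index, and `E_i = eᵢ eᵢ†`.  Then for all `s, t ≥ 0`, in the Loewner order,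
`B† (M + ((s+t)/2) E_i)⁻¹ B ≤ (1/2) (B† (M + s E_i)⁻¹ B + B† (M + t E_i)⁻¹ B)`;
i.e. `t ↦ B† (M + t E_i)⁻¹ B` is midpoint-convex on `[0, ∞)`. -/
theorem quadratic_form_resolvent_midpoint_convex (n m : ℕ)
    (M : Matrix (Fin n) (Fin n) ℂ) (hM : M.PosDef)
    (B : Matrix (Fin n) (Fin m) ℂ) (i : Fin n) (s t : ℝ) (hs : 0 ≤ s) (ht : 0 ≤ t) :
    ((1 / 2 : ℂ) • (Bᴴ * (M + (s : ℂ) • Matrix.single i i 1)⁻¹ * B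
        + Bᴴ * (M + (t : ℂ) • Matrix.single i i 1)⁻¹ * B)
      - Bᴴ * (M + (((s + t) / 2 : ℝ) : ℂ) • Matrix.single i i 1)⁻¹ * B).PosSemidef := by
  set E := Matrix.single i i (1:ℂ) with hEdef
  set A := M + (s : ℂ) • E with hAdef
  set C := M + (t : ℂ) • E with hCdef
  set H := M + (((s + t) / 2 : ℝ) : ℂ) • E with hHdef
  have hA : A.PosDef := hM.add_posSemidef (psd_real_smul s hs (psd_E i))
  have hC : C.PosDef := hM.add_posSemidef (psd_real_smul t ht (psd_E i))
  have hH2 : H = (2:ℂ)⁻¹ • (A + C) := by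
    rw [hHdef, hAdef, hCdef]
    ext a b
    simp [Matrix.add_apply, Matrix.smul_apply]
    ring
  clear_value E A C H
  have hAC : (A + C).PosDef := hA.add hC
  have hP : A⁻¹.PosDef := hA.inv
  have hQ : C⁻¹.PosDef := hC.inv
  set P := A⁻¹ with hPdef
  set Q := C⁻¹ with hQdef
  have hPQ : (P + Q).PosDef := hP.add hQ
  set S := (P + Q)⁻¹ with hSdef
  have hACc : (A + C) * (A + C)⁻¹ = 1 :=
    Matrix.mul_nonsing_inv _ ((Matrix.isUnit_iff_isUnit_det _).mp hAC.isUnit)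
  have hAc : A * P = 1 :=
    Matrix.mul_nonsing_inv _ ((Matrix.isUnit_iff_isUnit_det _).mp hA.isUnit)
  have hAc' : P * A = 1 :=
    Matrix.nonsing_inv_mul _ ((Matrix.isUnit_iff_isUnit_det _).mp hA.isUnit)
  have hCc : C * Q = 1 :=
    Matrix.mul_nonsing_inv _ ((Matrix.isUnit_iff_isUnit_det _).mp hC.isUnit)
  have hCc' : Q * C = 1 :=
    Matrix.nonsing_inv_mul _ ((Matrix.isUnit_iff_isUnit_det _).mp hC.isUnit)
  have hSc : (P + Q) * S = 1 :=
    Matrix.mul_nonsing_inv _ ((Matrix.isUnit_iff_isUnit_det _).mp hPQ.isUnit)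
  have hHinv : H⁻¹ = (2:ℂ) • (A + C)⁻¹ := by
    apply Matrix.inv_eq_right_inv
    rw [hH2, Matrix.smul_mul, Matrix.mul_smul, smul_smul, hACc]
    norm_num
  have key1 : A + C = C * (P + Q) * A := by
    rw [Matrix.mul_add, Matrix.add_mul, Matrix.mul_assoc C P A, hAc', Matrix.mul_one,
      hCc, Matrix.one_mul, add_comm]
  have key2 : A + C = A * (P + Q) * C := by
    rw [Matrix.mul_add, Matrix.add_mul, Matrix.mul_assoc A Q C, hCc', Matrix.mul_one,
      hAc, Matrix.one_mul, add_comm]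
  have inv1 : (A + C)⁻¹ = P * S * Q := by
    rw [key1, Matrix.mul_inv_rev, Matrix.mul_inv_rev, ← Matrix.mul_assoc, ← hPdef, ← hQdef, ← hSdef]
  have inv2 : (A + C)⁻¹ = Q * S * P := by
    rw [key2, Matrix.mul_inv_rev, Matrix.mul_inv_rev, ← Matrix.mul_assoc, ← hPdef, ← hQdef, ← hSdef]
  have e1 : P * S * P + Q * S * P = P := by
    rw [← Matrix.add_mul, ← Matrix.add_mul, hSc, Matrix.one_mul]
  have e2 : P * S * Q + Q * S * Q = Q := by
    rw [← Matrix.add_mul, ← Matrix.add_mul, hSc, Matrix.one_mul]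
  have hPSP : P * S * P = P - Q * S * P := eq_sub_of_add_eq e1
  have hQSQ : Q * S * Q = Q - P * S * Q := eq_sub_of_add_eq' e2
  have ident : (P - Q) * S * (P - Q) = P + Q - (4:ℂ) • (A + C)⁻¹ := by
    have expand : (P - Q) * S * (P - Q)
        = P * S * P - P * S * Q - Q * S * P + Q * S * Q := by
      noncomm_ring
    rw [expand, hPSP, hQSQ, show Q * S * P = P * S * Q from inv2.symm.trans inv1, inv1]
    module
  have hD : (1/2 : ℂ) • (P + Q) - H⁻¹ = (1/2 : ℂ) • ((P - Q) * S * (P - Q)) := by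
    rw [ident, hHinv]
    module
  have hXherm : (P - Q)ᴴ = P - Q := by
    rw [conjTranspose_sub, hP.isHermitian.eq, hQ.isHermitian.eq]
  have hcore : ((P - Q) * S * (P - Q)).PosSemidef := by
    have := (hPQ.inv.posSemidef).conjTranspose_mul_mul_same (P - Q)
    rwa [hXherm] at this
  have hDpsd : ((1/2 : ℂ) • (P + Q) - H⁻¹).PosSemidef := by
    rw [hD]
    have := psd_real_smul (1/2 : ℝ) (by norm_num) hcore
    simpa using this
  have final := hDpsd.conjTranspose_mul_mul_same B
  have heq : Bᴴ * ((1/2 : ℂ) • (P + Q) - H⁻¹) * B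
      = (1 / 2 : ℂ) • (Bᴴ * P * B + Bᴴ * Q * B) - Bᴴ * H⁻¹ * B := by
    simp only [Matrix.mul_sub, Matrix.sub_mul, Matrix.mul_smul, Matrix.smul_mul,
      Matrix.mul_add, Matrix.add_mul, Matrix.mul_assoc]
  rwa [heq] at final
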